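/- arXiv:2006.02412 — 2 statements merged into one kernel-verified Lean document; each statement's English description precedes it below -/
import Mathlib

section
/- Let $\{S_i(x) = r_i x + t_i + \lambda_i\}_{i=1}^m$ be a translation family of self-similar IFSs on $\mathbb{R}$ with contraction ratios $r_i \in (-1,1)\setminus\{0\}$. Fix infinite sequences $\mathbf{i}, \mathbf{j} \in \{1,\ldots,m\}^{\mathbb{N}}$ with $i_1 \neq j_1$, and suppose $|r_{i_1}| + |r_{j_1}| < 1$ and more generally $|r_i| + |r_j| < 1$ for all $i \neq j$. Then there exists $p \in \{i_1, j_1\}$ such that $\big|\frac{\partial}{\partial\lambda_p}\big(\Pi_{\underline{\lambda}}(\mathbf{i}) - \Pi_{\underline{\lambda}}(\mathbf{j})\big)\big| \ge 1 - |r_{i_1}| - |r_{j_1}| > 0$. -/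
set_option maxHeartbeats 2000000

/-- Natural projection of the translation family
`S_i(x) = r_i x + t_i + λ_i`:  `Π_λ(𝐢) = ∑ₙ r_{i₀}⋯r_{i_{n-1}} (t_{iₙ} + λ_{iₙ})`. -/
noncomputable def transProj {m : ℕ} (r t : Fin m → ℝ) (lam : Fin m → ℝ) (i : ℕ → Fin m) : ℝ :=
  ∑' n : ℕ, (∏ k ∈ Finset.range n, r (i k)) * (t (i n) + lam (i n))

open Finset

namespace S4
variable {m : ℕ}

lemma summable_aux (r : Fin m → ℝ) (C : ℝ) (hC0 : 0 ≤ C) (hC1 : C < 1)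
    (hrC : ∀ k, |r k| ≤ C) (x : ℕ → Fin m) (c : ℕ → ℝ) (B : ℝ)
    (hc : ∀ n, |c n| ≤ B) :
    Summable (fun n => (∏ k ∈ Finset.range n, r (x k)) * c n) := by
  have hB : 0 ≤ B := le_trans (abs_nonneg _) (hc 0)
  apply Summable.of_norm_bounded (g := fun n => B * C ^ n)
    ((summable_geometric_of_lt_one hC0 hC1).mul_left B)
  intro n
  have h1 : |∏ k ∈ Finset.range n, r (x k)| ≤ C ^ n := by
    rw [Finset.abs_prod]
    calc ∏ k ∈ Finset.range n, |r (x k)|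
        ≤ ∏ k ∈ Finset.range n, C :=
          Finset.prod_le_prod (fun _ _ => abs_nonneg _) (fun k _ => hrC _)
      _ = C ^ n := by simp
  rw [Real.norm_eq_abs, abs_mul]
  calc |∏ k ∈ Finset.range n, r (x k)| * |c n| ≤ C ^ n * B :=
        mul_le_mul h1 (hc n) (abs_nonneg _) (pow_nonneg hC0 n)
    _ = B * C ^ n := mul_comm _ _

lemma partial_bound (r : Fin m → ℝ) (d : Fin m → ℝ) (P Q : ℝ) (hP : 0 ≤ P) (hQ : 0 ≤ Q)
    (hstep : ∀ s : Fin m, ∀ x : ℝ, -Q ≤ x → x ≤ P →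
      -Q ≤ d s + r s * x ∧ d s + r s * x ≤ P) :
    ∀ (N : ℕ) (y : ℕ → Fin m),
      -Q ≤ (∑ n ∈ Finset.range N, (∏ k ∈ Finset.range n, r (y k)) * d (y n)) ∧
      (∑ n ∈ Finset.range N, (∏ k ∈ Finset.range n, r (y k)) * d (y n)) ≤ P := by
  intro N
  induction N with
  | zero => intro y; simp; constructor <;> linarith
  | succ N ih =>
    intro y
    have hrw : (∑ n ∈ Finset.range (N+1), (∏ k ∈ Finset.range n, r (y k)) * d (y n))
        = d (y 0) + r (y 0) *
          (∑ n ∈ Finset.range N, (∏ k ∈ Finset.range n, r (y (k+1))) * d (y (n+1))) := by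
      rw [Finset.sum_range_succ', Finset.mul_sum]
      simp only [Finset.prod_range_succ', Finset.prod_range_zero, one_mul]
      rw [add_comm]
      congr 1
      apply Finset.sum_congr rfl
      intro n _
      ring
    rw [hrw]
    exact hstep (y 0) _ (ih (fun k => y (k+1))).1 (ih (fun k => y (k+1))).2

lemma tsum_bound (f : ℕ → ℝ) (hf : Summable f) (P Q : ℝ)
    (h : ∀ N, -Q ≤ (∑ n ∈ Finset.range N, f n) ∧ (∑ n ∈ Finset.range N, f n) ≤ P) :
    -Q ≤ (∑' n, f n) ∧ (∑' n, f n) ≤ P := by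
  constructor
  · have h2 : ∑' n, -f n ≤ Q := by
      apply Summable.tsum_le_of_sum_range_le hf.neg
      intro n
      have := (h n).1
      rw [Finset.sum_neg_distrib]
      linarith
    rw [tsum_neg] at h2
    linarith
  · exact Summable.tsum_le_of_sum_range_le hf (fun n => (h n).2)

lemma tsum_shift (r : Fin m → ℝ) (C : ℝ) (hC0 : 0 ≤ C) (hC1 : C < 1)
    (hrC : ∀ k, |r k| ≤ C) (d : Fin m → ℝ) (B : ℝ) (hd : ∀ s, |d s| ≤ B)
    (x : ℕ → Fin m) :
    (∑' n, (∏ k ∈ Finset.range n, r (x k)) * d (x n))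
      = d (x 0) + r (x 0) *
        (∑' n, (∏ k ∈ Finset.range n, r (x (k+1))) * d (x (n+1))) := by
  have hs : Summable (fun n => (∏ k ∈ Finset.range n, r (x k)) * d (x n)) :=
    summable_aux r C hC0 hC1 hrC x _ B (fun n => hd _)
  rw [Summable.tsum_eq_zero_add hs]
  simp only [Finset.prod_range_zero, one_mul]
  congr 1
  have : ∀ n : ℕ, (∏ k ∈ Finset.range (n+1), r (x k)) * d (x (n+1))
      = r (x 0) * ((∏ k ∈ Finset.range n, r (x (k+1))) * d (x (n+1))) := by
    intro n
    rw [Finset.prod_range_succ']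
    ring
  rw [tsum_congr this, tsum_mul_left]

/-- The indicator series `E p x`. -/
noncomputable def Efun (r : Fin m → ℝ) (p : Fin m) (x : ℕ → Fin m) : ℝ :=
  ∑' n, (∏ k ∈ Finset.range n, r (x k)) * (if x n = p then 1 else 0)

lemma transProj_decomp (r t : Fin m → ℝ) (C : ℝ) (hC0 : 0 ≤ C) (hC1 : C < 1)
    (hrC : ∀ k, |r k| ≤ C) (lam : Fin m → ℝ) (p : Fin m) (s : ℝ) (x : ℕ → Fin m) :
    transProj r t (Function.update lam p s) x
      = transProj r t lam x + (s - lam p) * Efun r p x := by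
  have hBt : ∀ n, |t (x n) + lam (x n)| ≤ ∑ k : Fin m, |t k + lam k| := by
    intro n
    exact Finset.single_le_sum (f := fun k => |t k + lam k|)
      (fun k _ => abs_nonneg _) (Finset.mem_univ (x n))
  have h1 : Summable (fun n => (∏ k ∈ Finset.range n, r (x k)) * (t (x n) + lam (x n))) :=
    summable_aux r C hC0 hC1 hrC x _ _ hBt
  have h2 : Summable (fun n => (∏ k ∈ Finset.range n, r (x k)) *
      ((s - lam p) * (if x n = p then 1 else 0))) := by
    apply summable_aux r C hC0 hC1 hrC x _ (|s - lam p|)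
    intro n
    rw [abs_mul]
    rcases eq_or_ne (x n) p with h | h <;> simp [h, abs_nonneg]
  have key : ∀ n : ℕ, (∏ k ∈ Finset.range n, r (x k)) * (t (x n) + Function.update lam p s (x n))
      = (∏ k ∈ Finset.range n, r (x k)) * (t (x n) + lam (x n))
        + (∏ k ∈ Finset.range n, r (x k)) * ((s - lam p) * (if x n = p then 1 else 0)) := by
    intro n
    rcases eq_or_ne (x n) p with h | h
    · rw [h, Function.update_self, if_pos rfl]; ring
    · rw [Function.update_of_ne h, if_neg h]; ring
  unfold transProj Efun
  rw [tsum_congr key, Summable.tsum_add h1 h2]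
  congr 1
  have : ∀ n : ℕ, (∏ k ∈ Finset.range n, r (x k)) * ((s - lam p) * (if x n = p then 1 else 0))
      = (s - lam p) * ((∏ k ∈ Finset.range n, r (x k)) * (if x n = p then 1 else 0)) := by
    intro n; ring
  rw [tsum_congr this, tsum_mul_left]

lemma deriv_eq (r t : Fin m → ℝ) (C : ℝ) (hC0 : 0 ≤ C) (hC1 : C < 1)
    (hrC : ∀ k, |r k| ≤ C) (lam : Fin m → ℝ) (p : Fin m) (i j : ℕ → Fin m) :
    deriv (fun s : ℝ =>
        transProj r t (Function.update lam p s) i -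
        transProj r t (Function.update lam p s) j) (lam p)
      = Efun r p i - Efun r p j := by
  have hfun : (fun s : ℝ =>
        transProj r t (Function.update lam p s) i -
        transProj r t (Function.update lam p s) j)
      = fun s : ℝ => (transProj r t lam i - transProj r t lam j)
          + (s - lam p) * (Efun r p i - Efun r p j) := by
    funext s
    rw [transProj_decomp r t C hC0 hC1 hrC lam p s i,
        transProj_decomp r t C hC0 hC1 hrC lam p s j]
    ring
  rw [hfun]
  have : HasDerivAt (fun s : ℝ => (transProj r t lam i - transProj r t lam j)
      + (s - lam p) * (Efun r p i - Efun r p j)) (Efun r p i - Efun r p j) (lam p) := by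
    have h0 : HasDerivAt (fun s : ℝ => (s - lam p) * (Efun r p i - Efun r p j))
        (1 * (Efun r p i - Efun r p j)) (lam p) :=
      ((hasDerivAt_id (lam p)).sub_const (lam p)).mul_const _
    simpa using h0.const_add (transProj r t lam i - transProj r t lam j)
  exact this.deriv

lemma small_mul (ρ x P Q : ℝ) (hP : 0 ≤ P) (hQ : 0 ≤ Q)
    (h1 : |ρ| * P ≤ Q) (h2 : |ρ| * Q ≤ P) (h3 : |ρ| ≤ 1)
    (hx1 : -Q ≤ x) (hx2 : x ≤ P) : -Q ≤ ρ * x ∧ ρ * x ≤ P := by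
  have hρ : 0 ≤ |ρ| := abs_nonneg ρ
  have hxm : |x| ≤ max P Q := by
    rw [abs_le]
    exact ⟨by have := le_max_right P Q; linarith, le_trans hx2 (le_max_left P Q)⟩
  have ha : |ρ * x| ≤ |ρ| * max P Q := by
    rw [abs_mul]; exact mul_le_mul_of_nonneg_left hxm hρ
  have hp : |ρ * x| ≤ P ∧ |ρ * x| ≤ Q := by
    rcases le_total P Q with h | h
    · rw [max_eq_right h] at ha
      exact ⟨le_trans ha h2, le_trans ha (by nlinarith)⟩
    · rw [max_eq_left h] at ha
      exact ⟨le_trans ha (by nlinarith), le_trans ha h1⟩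
  exact ⟨by have := neg_abs_le (ρ * x); linarith [hp.2],
    le_trans (le_abs_self _) hp.1⟩

lemma cases_lemma (r : Fin m → ℝ) (a b : Fin m) (hab : a ≠ b)
    (hpair : ∀ k l : Fin m, k ≠ l → |r k| + |r l| < 1) :
    ∃ P Q : ℝ, 0 ≤ P ∧ 0 ≤ Q ∧
      (∀ s : Fin m, ∀ x : ℝ, -Q ≤ x → x ≤ P →
        -Q ≤ ((if s = a then (1:ℝ) else 0) - (if s = b then 1 else 0)) + r s * x ∧
        ((if s = a then (1:ℝ) else 0) - (if s = b then 1 else 0)) + r s * x ≤ P) ∧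
      (∀ z z' : ℝ, -Q ≤ z → z ≤ P → -Q ≤ z' → z' ≤ P →
        -(2 * (|r a| + |r b|)) ≤ r a * z - r b * z') := by
  obtain ⟨u, hu⟩ : ∃ x : ℝ, |r a| = x := ⟨_, rfl⟩
  obtain ⟨v, hv⟩ : ∃ x : ℝ, |r b| = x := ⟨_, rfl⟩
  rw [hu, hv]
  have huv : u + v < 1 := by rw [← hu, ← hv]; exact hpair a b hab
  have hu0 : 0 ≤ u := hu ▸ abs_nonneg _
  have hv0 : 0 ≤ v := hv ▸ abs_nonneg _
  have hu1 : u < 1 := by linarith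
  have hv1 : v < 1 := by linarith
  have hu1' : (0:ℝ) < 1 - u := by linarith
  have hv1' : (0:ℝ) < 1 - v := by linarith
  have hsma : ∀ s : Fin m, s ≠ a → s ≠ b → |r s| ≤ 1 - u ∧ |r s| ≤ 1 - v := by
    intro s hsa hsb
    constructor
    · have := hpair s a hsa; rw [hu] at this; linarith
    · have := hpair s b hsb; rw [hv] at this; linarith
  -- generic treatment of symbols other than a, b
  have other : ∀ (P Q : ℝ), 0 ≤ P → 0 ≤ Q →
      (∀ s : Fin m, s ≠ a → s ≠ b → |r s| * P ≤ Q ∧ |r s| * Q ≤ P) →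
      ∀ s : Fin m, s ≠ a → s ≠ b → ∀ x : ℝ, -Q ≤ x → x ≤ P →
        -Q ≤ ((if s = a then (1:ℝ) else 0) - (if s = b then 1 else 0)) + r s * x ∧
        ((if s = a then (1:ℝ) else 0) - (if s = b then 1 else 0)) + r s * x ≤ P := by
    intro P Q hP hQ hcond s hsa hsb x hx1 hx2
    rw [if_neg hsa, if_neg hsb]
    have h3 : |r s| ≤ 1 := by have := (hsma s hsa hsb).1; linarith
    have := small_mul (r s) x P Q hP hQ (hcond s hsa hsb).1 (hcond s hsa hsb).2 h3 hx1 hx2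
    constructor
    · linarith [this.1]
    · linarith [this.2]
  rcases le_or_gt 0 (r a) with hra | hra <;> rcases le_or_gt 0 (r b) with hrb | hrb
  · -- Case ++ : r a = u, r b = v
    have hrae : r a = u := by rw [← hu, abs_of_nonneg hra]
    have hrbe : r b = v := by rw [← hv, abs_of_nonneg hrb]
    obtain ⟨P, hPd⟩ : ∃ P : ℝ, P = 1/(1-u) := ⟨_, rfl⟩
    obtain ⟨Q, hQd⟩ : ∃ Q : ℝ, Q = 1/(1-v) := ⟨_, rfl⟩
    have hP : 0 ≤ P := by rw [hPd]; positivity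
    have hQ : 0 ≤ Q := by rw [hQd]; positivity
    have hPe : (1-u) * P = 1 := by rw [hPd]; field_simp
    have hQe : (1-v) * Q = 1 := by rw [hQd]; field_simp
    refine ⟨P, Q, hP, hQ, ?_, ?_⟩
    · intro s x hx1 hx2
      rcases eq_or_ne s a with rfl | hsa
      · rw [if_pos rfl, if_neg hab, hrae]
        constructor
        · nlinarith [mul_le_mul_of_nonneg_left hx1 hu0, mul_le_mul_of_nonneg_right hu1.le hQ]
        · nlinarith [mul_le_mul_of_nonneg_left hx2 hu0]
      rcases eq_or_ne s b with rfl | hsb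
      · rw [if_neg hsa, if_pos rfl, hrbe]
        constructor
        · nlinarith [mul_le_mul_of_nonneg_left hx1 hv0]
        · nlinarith [mul_le_mul_of_nonneg_left hx2 hv0, mul_le_mul_of_nonneg_right hv1.le hP]
      · refine other P Q hP hQ ?_ s hsa hsb x hx1 hx2
        intro s' hsa' hsb'
        obtain ⟨h1, h2⟩ := hsma s' hsa' hsb'
        have h0 := abs_nonneg (r s')
        constructor
        · nlinarith [mul_nonneg (by linarith : (0:ℝ) ≤ 1 - u - |r s'|) hP,
            mul_nonneg hv0 hQ]
        · nlinarith [mul_nonneg (by linarith : (0:ℝ) ≤ 1 - v - |r s'|) hQ,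
            mul_nonneg hu0 hP]
    · intro z z' hz1 hz2 hz3 hz4
      rw [hrae, hrbe]
      have k0 : (0:ℝ) ≤ u + v - 2*(u*v) := by
        nlinarith [mul_nonneg hu0 (by linarith : (0:ℝ) ≤ 1 - v),
          mul_nonneg hv0 (by linarith : (0:ℝ) ≤ 1 - u)]
      have k1 : (0:ℝ) ≤ (1 - u - v) * (u + v - 2*(u*v)) := mul_nonneg (by linarith) k0
      have e1 : (u * Q + v * P) * ((1-u)*(1-v)) = u*(1-u) + v*(1-v) := by
        linear_combination (u*(1-u)) * hQe + (v*(1-v)) * hPe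
      have key : u * Q + v * P ≤ 2*(u+v) := by
        have hpos : (0:ℝ) < (1-u)*(1-v) := mul_pos hu1' hv1'
        rw [← mul_le_mul_iff_of_pos_right hpos, e1]
        nlinarith [k1]
      have m1 : u * (-Q) ≤ u * z := mul_le_mul_of_nonneg_left hz1 hu0
      have m2 : v * z' ≤ v * P := mul_le_mul_of_nonneg_left hz4 hv0
      linarith
  · -- Case +- : r a = u, r b = -v
    have hrae : r a = u := by rw [← hu, abs_of_nonneg hra]
    have hrbe : r b = -v := by rw [← hv, abs_of_neg hrb]; ring
    obtain ⟨P, hPd⟩ : ∃ P : ℝ, P = 1/(1-u) := ⟨_, rfl⟩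
    obtain ⟨Q, hQd⟩ : ∃ Q : ℝ, Q = 1 + v * P := ⟨_, rfl⟩
    have hP : 0 ≤ P := by rw [hPd]; positivity
    have hPe : (1-u) * P = 1 := by rw [hPd]; field_simp
    have hP1 : 1 ≤ P := by nlinarith [mul_nonneg hu0 hP]
    have hQ : 0 ≤ Q := by rw [hQd]; nlinarith [mul_nonneg hv0 hP]
    have hQe : Q = 1 + v * P := hQd
    have hQ2 : Q ≤ 2 := by
      have : v * P ≤ (1-u) * P := mul_le_mul_of_nonneg_right (by linarith) hP
      rw [hQe]; linarith [hPe]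
    refine ⟨P, Q, hP, hQ, ?_, ?_⟩
    · intro s x hx1 hx2
      rcases eq_or_ne s a with rfl | hsa
      · rw [if_pos rfl, if_neg hab, hrae]
        constructor
        · nlinarith [mul_le_mul_of_nonneg_left hx1 hu0, mul_le_mul_of_nonneg_right hu1.le hQ]
        · nlinarith [mul_le_mul_of_nonneg_left hx2 hu0]
      rcases eq_or_ne s b with rfl | hsb
      · rw [if_neg hsa, if_pos rfl, hrbe]
        constructor
        · -- -Q ≤ -1 + (-v) * x  given x ≤ P, Q = 1 + vP
          nlinarith [mul_le_mul_of_nonneg_left hx2 hv0]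
        · -- -1 + (-v) * x ≤ P given -Q ≤ x : -1 + vQ ≤ P
          have : v * (-x) ≤ v * Q := mul_le_mul_of_nonneg_left (by linarith) hv0
          nlinarith [mul_le_mul_of_nonneg_right hv1.le hQ]
      · refine other P Q hP hQ ?_ s hsa hsb x hx1 hx2
        intro s' hsa' hsb'
        obtain ⟨h1, h2⟩ := hsma s' hsa' hsb'
        have h0 := abs_nonneg (r s')
        constructor
        · -- |ρ| P ≤ Q : |ρ| P ≤ (1-u) P = 1 ≤ Q
          nlinarith [mul_nonneg (by linarith : (0:ℝ) ≤ 1 - u - |r s'|) hP,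
            mul_nonneg hv0 hP]
        · -- |ρ| Q ≤ P : |ρ| Q ≤ (1-v) Q = (1-v)(1+vP) = 1 - v + vP - v²P ≤ P
          have c1 : |r s'| * Q ≤ (1-v) * Q :=
            mul_le_mul_of_nonneg_right (by linarith) hQ
          have c2 : (1-v) * Q ≤ P := by
            rw [hQe]
            nlinarith [mul_nonneg (mul_nonneg hv0 hv0) hP, mul_nonneg hv0 hP,
              mul_le_mul_of_nonneg_right hv1.le hP]
          linarith
    · intro z z' hz1 hz2 hz3 hz4
      rw [hrae, hrbe]
      -- u z + v z' ≥ -(u+v) Q ≥ -2 (u+v)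
      have m1 : u * (-Q) ≤ u * z := mul_le_mul_of_nonneg_left hz1 hu0
      have m2 : v * (-Q) ≤ v * z' := mul_le_mul_of_nonneg_left hz3 hv0
      have m3 : (u+v) * Q ≤ (u+v) * 2 := mul_le_mul_of_nonneg_left hQ2 (by linarith)
      nlinarith
  · -- Case -+ : r a = -u, r b = v
    have hrae : r a = -u := by rw [← hu, abs_of_neg hra]; ring
    have hrbe : r b = v := by rw [← hv, abs_of_nonneg hrb]
    obtain ⟨Q, hQd⟩ : ∃ Q : ℝ, Q = 1/(1-v) := ⟨_, rfl⟩
    obtain ⟨P, hPd⟩ : ∃ P : ℝ, P = 1 + u * Q := ⟨_, rfl⟩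
    have hQ : 0 ≤ Q := by rw [hQd]; positivity
    have hQe : (1-v) * Q = 1 := by rw [hQd]; field_simp
    have hQ1 : 1 ≤ Q := by nlinarith [mul_nonneg hv0 hQ]
    have hP : 0 ≤ P := by rw [hPd]; nlinarith [mul_nonneg hu0 hQ]
    have hPe : P = 1 + u * Q := hPd
    have hP2 : P ≤ 2 := by
      have : u * Q ≤ (1-v) * Q := mul_le_mul_of_nonneg_right (by linarith) hQ
      rw [hPe]; linarith [hQe]
    refine ⟨P, Q, hP, hQ, ?_, ?_⟩
    · intro s x hx1 hx2
      rcases eq_or_ne s a with rfl | hsa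
      · rw [if_pos rfl, if_neg hab, hrae]
        constructor
        · -- -Q ≤ 1 + (-u) x given x ≤ P : 1 - u P ≥ -Q
          have : u * x ≤ u * P := mul_le_mul_of_nonneg_left hx2 hu0
          nlinarith [mul_le_mul_of_nonneg_right hu1.le hP]
        · -- 1 + (-u) x ≤ P given -Q ≤ x : 1 + u Q ≤ P (eq)
          have : u * (-x) ≤ u * Q := mul_le_mul_of_nonneg_left (by linarith) hu0
          nlinarith
      rcases eq_or_ne s b with rfl | hsb
      · rw [if_neg hsa, if_pos rfl, hrbe]
        constructor
        · nlinarith [mul_le_mul_of_nonneg_left hx1 hv0]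
        · nlinarith [mul_le_mul_of_nonneg_left hx2 hv0, mul_le_mul_of_nonneg_right hv1.le hP]
      · refine other P Q hP hQ ?_ s hsa hsb x hx1 hx2
        intro s' hsa' hsb'
        obtain ⟨h1, h2⟩ := hsma s' hsa' hsb'
        have h0 := abs_nonneg (r s')
        constructor
        · -- |ρ| P ≤ Q : |ρ| P ≤ (1-u) P = (1-u)(1+uQ) ≤ Q
          have c1 : |r s'| * P ≤ (1-u) * P :=
            mul_le_mul_of_nonneg_right (by linarith) hP
          have c2 : (1-u) * P ≤ Q := by
            rw [hPe]
            nlinarith [mul_nonneg (mul_nonneg hu0 hu0) hQ, mul_nonneg hu0 hQ,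
              mul_le_mul_of_nonneg_right hu1.le hQ]
          linarith
        · nlinarith [mul_nonneg (by linarith : (0:ℝ) ≤ 1 - v - |r s'|) hQ,
            mul_nonneg hu0 hQ]
    · intro z z' hz1 hz2 hz3 hz4
      rw [hrae, hrbe]
      -- (-u) z - v z' ≥ -u P - v P = -(u+v) P ≥ -2(u+v)
      have m1 : u * z ≤ u * P := mul_le_mul_of_nonneg_left hz2 hu0
      have m2 : v * z' ≤ v * P := mul_le_mul_of_nonneg_left hz4 hv0
      have m3 : (u+v) * P ≤ (u+v) * 2 := mul_le_mul_of_nonneg_left hP2 (by linarith)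
      nlinarith
  · -- Case -- : r a = -u, r b = -v
    have hrae : r a = -u := by rw [← hu, abs_of_neg hra]; ring
    have hrbe : r b = -v := by rw [← hv, abs_of_neg hrb]; ring
    have huvpos : (0:ℝ) < 1 - u*v := by nlinarith
    obtain ⟨P, hPd⟩ : ∃ P : ℝ, P = (1+u)/(1-u*v) := ⟨_, rfl⟩
    obtain ⟨Q, hQd⟩ : ∃ Q : ℝ, Q = (1+v)/(1-u*v) := ⟨_, rfl⟩
    have hP : 0 ≤ P := by rw [hPd]; positivity
    have hQ : 0 ≤ Q := by rw [hQd]; positivity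
    have hPe : (1-u*v) * P = 1 + u := by rw [hPd]; field_simp
    have hQe : (1-u*v) * Q = 1 + v := by rw [hQd]; field_simp
    have hPQ : P = 1 + u * Q := by
      rw [hPd, hQd]
      field_simp
      ring
    have hQP : Q = 1 + v * P := by
      exact mul_left_cancel₀ huvpos.ne' (by linear_combination hQe - v * hPe)
    refine ⟨P, Q, hP, hQ, ?_, ?_⟩
    · intro s x hx1 hx2
      rcases eq_or_ne s a with rfl | hsa
      · rw [if_pos rfl, if_neg hab, hrae]
        constructor
        · -- 1 - u x ≥ -Q : u x ≤ u P ≤ P = 1 + uQ ≤ 1 + Q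
          have c1 : u * x ≤ u * P := mul_le_mul_of_nonneg_left hx2 hu0
          have c2 : u * P ≤ 1 * P := mul_le_mul_of_nonneg_right hu1.le hP
          have c3 : u * Q ≤ 1 * Q := mul_le_mul_of_nonneg_right hu1.le hQ
          nlinarith [hPQ]
        · -- 1 - u x ≤ 1 + u Q = P
          have : u * (-x) ≤ u * Q := mul_le_mul_of_nonneg_left (by linarith) hu0
          nlinarith [hPQ]
      rcases eq_or_ne s b with rfl | hsb
      · rw [if_neg hsa, if_pos rfl, hrbe]
        constructor
        · -- -1 - v x ≥ -Q = -(1 + v P)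
          have : v * x ≤ v * P := mul_le_mul_of_nonneg_left hx2 hv0
          nlinarith [hQP]
        · -- -1 - v x ≤ -1 + v Q ≤ P   (vQ ≤ Q ≤ 1 + P)
          have c1 : v * (-x) ≤ v * Q := mul_le_mul_of_nonneg_left (by linarith) hv0
          have c2 : v * Q ≤ 1 * Q := mul_le_mul_of_nonneg_right hv1.le hQ
          have c3 : v * P ≤ 1 * P := mul_le_mul_of_nonneg_right hv1.le hP
          nlinarith [hQP]
      · refine other P Q hP hQ ?_ s hsa hsb x hx1 hx2
        intro s' hsa' hsb'
        obtain ⟨h1, h2⟩ := hsma s' hsa' hsb'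
        have h0 := abs_nonneg (r s')
        constructor
        · -- |ρ| P ≤ (1-u) P and (1-u*v)((1-u)P) = (1-u)(1+u) = 1-u² ≤ 1+v
          have c1 : |r s'| * P ≤ (1-u) * P :=
            mul_le_mul_of_nonneg_right (by linarith) hP
          have c2 : (1-u) * P ≤ Q := by
            have e : (1-u*v) * ((1-u)*P) = (1-u)*(1+u) := by
              linear_combination (1-u) * hPe
            nlinarith [mul_nonneg hu0 hu0, mul_nonneg hv0 hQ, hQe]
          linarith
        · have c1 : |r s'| * Q ≤ (1-v) * Q :=
            mul_le_mul_of_nonneg_right (by linarith) hQ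
          have c2 : (1-v) * Q ≤ P := by
            have e : (1-u*v) * ((1-v)*Q) = (1-v)*(1+v) := by
              linear_combination (1-v) * hQe
            nlinarith [mul_nonneg hv0 hv0, mul_nonneg hu0 hP, hPe]
          linarith
    · intro z z' hz1 hz2 hz3 hz4
      rw [hrae, hrbe]
      -- (-u) z - (-v) z' = v z' - u z ≥ -v Q - u P ≥ -2(u+v)
      have m1 : u * z ≤ u * P := mul_le_mul_of_nonneg_left hz2 hu0
      have m2 : v * (-Q) ≤ v * z' := mul_le_mul_of_nonneg_left hz3 hv0
      have key : u * P + v * Q ≤ 2*(u+v) := by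
        have e1 : (u * P + v * Q) * (1-u*v) = u*(1+u) + v*(1+v) := by
          linear_combination u * hPe + v * hQe
        have k1 : (0:ℝ) ≤ (u*v) * (1 - u - v) :=
          mul_nonneg (mul_nonneg hu0 hv0) (by linarith)
        have k2 : (0:ℝ) ≤ (u+v) * (1 - u - v) :=
          mul_nonneg (by linarith) (by linarith)
        nlinarith [e1, k1, k2, mul_pos huvpos huvpos]
      nlinarith

end S4

open S4

/-- Lemma 2.8: for a translation family of self-similar IFSs with
`|r_i| + |r_j| < 1` for all `i ≠ j`, for any sequences `𝐢, 𝐣` with different first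
symbols, there is `p ∈ {i₁, j₁}` with
`|∂/∂λ_p (Π_λ(𝐢) - Π_λ(𝐣))| ≥ 1 - |r_{i₁}| - |r_{j₁}| > 0`. -/
theorem stmt4 (m : ℕ) (r t : Fin m → ℝ)
    (hr : ∀ k, r k ≠ 0 ∧ |r k| < 1)
    (hpair : ∀ k l, k ≠ l → |r k| + |r l| < 1)
    (i j : ℕ → Fin m) (hij : i 0 ≠ j 0) (lam : Fin m → ℝ) :
    ∃ p : Fin m, (p = i 0 ∨ p = j 0) ∧
      0 < 1 - |r (i 0)| - |r (j 0)| ∧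
      1 - |r (i 0)| - |r (j 0)| ≤
        |deriv (fun s : ℝ =>
          transProj r t (Function.update lam p s) i -
          transProj r t (Function.update lam p s) j) (lam p)| := by
  have hne : (Finset.univ : Finset (Fin m)).Nonempty := ⟨i 0, Finset.mem_univ _⟩
  obtain ⟨C, hCd⟩ : ∃ C : ℝ, C = Finset.univ.sup' hne (fun k => |r k|) := ⟨_, rfl⟩
  have hrC : ∀ k, |r k| ≤ C := fun k => hCd ▸ Finset.le_sup' (fun k => |r k|) (Finset.mem_univ k)
  have hC0 : 0 ≤ C := le_trans (abs_nonneg _) (hrC (i 0))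
  have hC1 : C < 1 := by
    rw [hCd, Finset.sup'_lt_iff]
    exact fun k _ => (hr k).2
  set a := i 0 with ha
  set b := j 0 with hb
  have hcpos : 0 < 1 - |r a| - |r b| := by have := hpair a b hij; linarith
  obtain ⟨P, Q, hP, hQ, hstep, hfin⟩ := cases_lemma r a b hij hpair
  obtain ⟨d, hdd⟩ : ∃ d : Fin m → ℝ,
      d = fun s => (if s = a then (1:ℝ) else 0) - (if s = b then 1 else 0) := ⟨_, rfl⟩
  have hdd' : ∀ s, d s = (if s = a then (1:ℝ) else 0) - (if s = b then 1 else 0) := by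
    intro s; rw [hdd]
  have hd1 : ∀ s, |d s| ≤ 1 := by
    intro s
    rw [hdd' s]
    split_ifs <;> norm_num
  have hsum : ∀ x : ℕ → Fin m,
      Summable (fun n => (∏ k ∈ Finset.range n, r (x k)) * d (x n)) :=
    fun x => summable_aux r C hC0 hC1 hrC x _ 1 (fun n => hd1 _)
  -- h x and its bounds
  have hbound : ∀ x : ℕ → Fin m,
      -Q ≤ (∑' n, (∏ k ∈ Finset.range n, r (x k)) * d (x n)) ∧
      (∑' n, (∏ k ∈ Finset.range n, r (x k)) * d (x n)) ≤ P := by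
    intro x
    apply tsum_bound _ (hsum x) P Q
    intro N
    exact partial_bound r d P Q hP hQ
      (by intro s y h1 h2; rw [hdd' s]; exact hstep s y h1 h2) N x
  -- h = Efun a - Efun b
  have hEdiff : ∀ x : ℕ → Fin m,
      (∑' n, (∏ k ∈ Finset.range n, r (x k)) * d (x n)) = Efun r a x - Efun r b x := by
    intro x
    have h1 : Summable (fun n => (∏ k ∈ Finset.range n, r (x k)) * (if x n = a then (1:ℝ) else 0)) := by
      apply summable_aux r C hC0 hC1 hrC x _ 1
      intro n; rcases eq_or_ne (x n) a with h | h <;> simp [h]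
    have h2 : Summable (fun n => (∏ k ∈ Finset.range n, r (x k)) * (if x n = b then (1:ℝ) else 0)) := by
      apply summable_aux r C hC0 hC1 hrC x _ 1
      intro n; rcases eq_or_ne (x n) b with h | h <;> simp [h]
    have : ∀ n : ℕ, (∏ k ∈ Finset.range n, r (x k)) * d (x n)
        = (∏ k ∈ Finset.range n, r (x k)) * (if x n = a then (1:ℝ) else 0)
          - (∏ k ∈ Finset.range n, r (x k)) * (if x n = b then (1:ℝ) else 0) := by
      intro n; rw [hdd' (x n)]; ring
    rw [tsum_congr this, Summable.tsum_sub h1 h2]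
    rfl
  -- shift identities
  have hshift : ∀ x : ℕ → Fin m,
      (∑' n, (∏ k ∈ Finset.range n, r (x k)) * d (x n))
        = d (x 0) + r (x 0) *
          (∑' n, (∏ k ∈ Finset.range n, r (x (k+1))) * d (x (n+1))) :=
    fun x => tsum_shift r C hC0 hC1 hrC d 1 hd1 x
  have hda : d a = 1 := by rw [hdd' a]; simp [hij]
  have hdb : d b = -1 := by rw [hdd' b]; simp [Ne.symm hij, hij]
  -- the crucial gap estimate
  have hgap : 2 * (1 - |r a| - |r b|) ≤
      (Efun r a i - Efun r a j) - (Efun r b i - Efun r b j) := by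
    have e1 : Efun r a i - Efun r b i
        = 1 + r a * (∑' n, (∏ k ∈ Finset.range n, r (i (k+1))) * d (i (n+1))) := by
      rw [← hEdiff i, hshift i, ← ha, hda]
    have e2 : Efun r a j - Efun r b j
        = -1 + r b * (∑' n, (∏ k ∈ Finset.range n, r (j (k+1))) * d (j (n+1))) := by
      rw [← hEdiff j, hshift j, ← hb, hdb]
    have hb1 := hbound (fun k => i (k+1))
    have hb2 := hbound (fun k => j (k+1))
    have hzz := hfin _ _ hb1.1 hb1.2 hb2.1 hb2.2
    have : (Efun r a i - Efun r a j) - (Efun r b i - Efun r b j)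
        = (Efun r a i - Efun r b i) - (Efun r a j - Efun r b j) := by ring
    rw [this, e1, e2]
    linarith
  -- choose p
  by_cases hcb : 1 - |r a| - |r b| ≤ |Efun r b i - Efun r b j|
  · refine ⟨b, Or.inr rfl, hcpos, ?_⟩
    rw [deriv_eq r t C hC0 hC1 hrC lam b i j]
    exact hcb
  · refine ⟨a, Or.inl rfl, hcpos, ?_⟩
    rw [deriv_eq r t C hC0 hC1 hrC lam a i j]
    push_neg at hcb
    have h1 : -(1 - |r a| - |r b|) < Efun r b i - Efun r b j := by
      have := neg_abs_le (Efun r b i - Efun r b j); linarith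
    have : 1 - |r a| - |r b| ≤ Efun r a i - Efun r a j := by linarith
    exact le_trans this (le_abs_self _)
end

section
/- In the complete metric space $\Theta_{\beta,\rho}^m(X)$ of conformal IFSs with the metric $\mathrm{dist}(\mathcal{T},\mathcal{G}) = \max_i \vertiii{T_i - G_i}$ (where $\vertiii{h} = \|h\|_{\sup} + \|h'\|_{\sup} + \sup_{x\neq y}|h'(x)-h'(y)|/|x-y|^\alpha$), the set of IFSs failing the Weak Separation Property is a $G_\delta$ set. -/
/-- Composition `S_{u₁} ∘ ⋯ ∘ S_{uₙ}` along a finite word. -/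
def wordComp {m : ℕ} (S : Fin m → ℝ → ℝ) : List (Fin m) → ℝ → ℝ
  | [] => id
  | i :: u => S i ∘ wordComp S u

/-- Natural projection (limit of the images of the basepoint `x₀`). -/
noncomputable def natProj {m : ℕ} (S : Fin m → ℝ → ℝ) (x₀ : ℝ) (i : ℕ → Fin m) : ℝ :=
  Filter.limUnder Filter.atTop
    (fun n => wordComp S (List.ofFn (fun k : Fin n => i k)) x₀)

/-- Attractor of the IFS. -/
noncomputable def attractor {m : ℕ} (S : Fin m → ℝ → ℝ) (x₀ : ℝ) : Set ℝ :=
  Set.range (natProj S x₀)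

/-- The family `Φ(x,r)` of restrictions to the attractor. -/
noncomputable def PhiFam {m : ℕ} (S : Fin m → ℝ → ℝ) (x₀ x r : ℝ) :
    Set ((attractor S x₀) → ℝ) :=
  {g | ∃ u : List (Fin m),
    Metric.diam (wordComp S u '' attractor S x₀) ≤ r ∧
    r < Metric.diam (wordComp S u.dropLast '' attractor S x₀) ∧
    (wordComp S u '' attractor S x₀ ∩ Metric.closedBall x r).Nonempty ∧
    g = (attractor S x₀).restrict (wordComp S u)}

/-- The Weak Separation Property: `sup_{x,r} #Φ(x,r) < ∞`. -/
noncomputable def WSPholds {m : ℕ} (S : Fin m → ℝ → ℝ) (x₀ : ℝ) : Prop :=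
  ∃ N : ℕ, ∀ x ∈ attractor S x₀, ∀ r > (0 : ℝ),
    (PhiFam S x₀ x r).Finite ∧ (PhiFam S x₀ x r).ncard ≤ N

/-- Membership in the space `Θ_{β,ρ}^m(X)` of conformal IFSs on `X = [x₀,x₁]`. -/
def ThetaSet (m : ℕ) (x₀ x₁ β ρ α : ℝ) : Set (Fin m → ℝ → ℝ) :=
  {S | ∀ i : Fin m,
    Set.MapsTo (S i) (Set.Icc x₀ x₁) (Set.Icc x₀ x₁) ∧
    Set.InjOn (S i) (Set.Icc x₀ x₁) ∧
    DifferentiableOn ℝ (S i) (Set.Icc x₀ x₁) ∧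
    (∀ x ∈ Set.Icc x₀ x₁, β ≤ |deriv (S i) x| ∧ |deriv (S i) x| ≤ ρ) ∧
    ∃ H : ℝ, ∀ x ∈ Set.Icc x₀ x₁, ∀ y ∈ Set.Icc x₀ x₁,
      |deriv (S i) x - deriv (S i) y| ≤ H * |x - y| ^ α}

/-- The metric `dist(𝒯,𝒢) = maxᵢ (‖Tᵢ-Gᵢ‖_∞ + ‖Tᵢ'-Gᵢ'‖_∞ + Hölder seminorm)`. -/
noncomputable def distTheta {m : ℕ} (x₀ x₁ α : ℝ) (S T : Fin m → ℝ → ℝ) : ℝ :=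
  ⨆ i : Fin m,
    ((⨆ x : Set.Icc x₀ x₁, |S i x.1 - T i x.1|) +
     (⨆ x : Set.Icc x₀ x₁, |deriv (S i) x.1 - deriv (T i) x.1|) +
     ⨆ p : Set.Icc x₀ x₁ × Set.Icc x₀ x₁,
       |(deriv (S i) p.1.1 - deriv (T i) p.1.1) - (deriv (S i) p.2.1 - deriv (T i) p.2.1)| /
         |p.1.1 - p.2.1| ^ α)

open Filter Set

section Aux

variable {m : ℕ} {x₀ x₁ β ρ α : ℝ}

lemma abs_sub_le_width {a b : ℝ} (ha : a ∈ Set.Icc x₀ x₁) (hb : b ∈ Set.Icc x₀ x₁) :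
    |a - b| ≤ x₁ - x₀ := by
  rw [abs_sub_le_iff]; constructor <;> [skip; skip] <;> (obtain ⟨h1,h2⟩ := ha; obtain ⟨h3,h4⟩ := hb; linarith)

lemma theta_diffAt {S : Fin m → ℝ → ℝ} (hS : S ∈ ThetaSet m x₀ x₁ β ρ α) (hβ : 0 < β)
    (i : Fin m) {x : ℝ} (hx : x ∈ Set.Icc x₀ x₁) : DifferentiableAt ℝ (S i) x := by
  by_contra h
  have h0 : deriv (S i) x = 0 := deriv_zero_of_not_differentiableAt h
  have h1 := ((hS i).2.2.2.1 x hx).1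
  rw [h0] at h1; simp at h1; linarith

lemma theta_lip {S : Fin m → ℝ → ℝ} (hS : S ∈ ThetaSet m x₀ x₁ β ρ α) (hβ : 0 < β)
    (i : Fin m) {x y : ℝ} (hx : x ∈ Set.Icc x₀ x₁) (hy : y ∈ Set.Icc x₀ x₁) :
    |S i x - S i y| ≤ ρ * |x - y| := by
  have := Convex.norm_image_sub_le_of_norm_deriv_le (𝕜 := ℝ) (f := S i) (s := Set.Icc x₀ x₁)
      (fun z hz => theta_diffAt hS hβ i hz)
      (fun z hz => by simpa using ((hS i).2.2.2.1 z hz).2) (convex_Icc _ _) hy hx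
  simpa [Real.norm_eq_abs] using this

lemma wordComp_cons (S : Fin m → ℝ → ℝ) (i : Fin m) (u : List (Fin m)) (x : ℝ) :
    wordComp S (i :: u) x = S i (wordComp S u x) := rfl

lemma wordComp_mapsTo {S : Fin m → ℝ → ℝ} (hS : S ∈ ThetaSet m x₀ x₁ β ρ α)
    (u : List (Fin m)) : Set.MapsTo (wordComp S u) (Set.Icc x₀ x₁) (Set.Icc x₀ x₁) := by
  induction u with
  | nil => exact fun x hx => hx
  | cons i u ih => exact fun x hx => (hS i).1 (ih hx)

lemma wordComp_lip {S : Fin m → ℝ → ℝ} (hS : S ∈ ThetaSet m x₀ x₁ β ρ α) (hβ : 0 < β)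
    (hβρ : β ≤ ρ) (u : List (Fin m)) {x y : ℝ} (hx : x ∈ Set.Icc x₀ x₁)
    (hy : y ∈ Set.Icc x₀ x₁) :
    |wordComp S u x - wordComp S u y| ≤ ρ ^ u.length * |x - y| := by
  have hρ0 : (0:ℝ) < ρ := lt_of_lt_of_le hβ hβρ
  induction u with
  | nil => simp [wordComp]
  | cons i u ih =>
    calc |wordComp S (i :: u) x - wordComp S (i :: u) y|
        = |S i (wordComp S u x) - S i (wordComp S u y)| := rfl
      _ ≤ ρ * |wordComp S u x - wordComp S u y| :=
          theta_lip hS hβ i (wordComp_mapsTo hS u hx) (wordComp_mapsTo hS u hy)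
      _ ≤ ρ * (ρ ^ u.length * |x - y|) := by
          exact mul_le_mul_of_nonneg_left ih hρ0.le
      _ = ρ ^ (i :: u).length * |x - y| := by
          simp [List.length_cons, pow_succ]; ring

lemma wordComp_lip_one {S : Fin m → ℝ → ℝ} (hS : S ∈ ThetaSet m x₀ x₁ β ρ α) (hβ : 0 < β)
    (hβρ : β ≤ ρ) (hρ : ρ < 1) (u : List (Fin m)) {x y : ℝ} (hx : x ∈ Set.Icc x₀ x₁)
    (hy : y ∈ Set.Icc x₀ x₁) :
    |wordComp S u x - wordComp S u y| ≤ |x - y| := by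
  have hρ0 : (0:ℝ) < ρ := lt_of_lt_of_le hβ hβρ
  have h1 : ρ ^ u.length ≤ 1 := pow_le_one₀ hρ0.le hρ.le
  calc |wordComp S u x - wordComp S u y| ≤ ρ ^ u.length * |x - y| :=
        wordComp_lip hS hβ hβρ u hx hy
    _ ≤ 1 * |x - y| := mul_le_mul_of_nonneg_right h1 (abs_nonneg _)
    _ = |x - y| := one_mul _

lemma wordComp_append' (S : Fin m → ℝ → ℝ) (u v : List (Fin m)) (x : ℝ) :
    wordComp S (u ++ v) x = wordComp S u (wordComp S v x) := by
  induction u with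
  | nil => rfl
  | cons i u ih => simp [wordComp_cons, ih, List.cons_append]

end Aux

section Aux2

open Filter Set Topology

variable {m : ℕ} {x₀ x₁ β ρ α : ℝ}

/-- partial orbit point -/
noncomputable def seqPt (S : Fin m → ℝ → ℝ) (x₀ : ℝ) (i : ℕ → Fin m) (n : ℕ) : ℝ :=
  wordComp S (List.ofFn fun k : Fin n => i k) x₀

lemma natProj_eq_limUnder (S : Fin m → ℝ → ℝ) (x₀ : ℝ) (i : ℕ → Fin m) :
    natProj S x₀ i = limUnder Filter.atTop (seqPt S x₀ i) := rfl

lemma seqPt_mem {S : Fin m → ℝ → ℝ} (hS : S ∈ ThetaSet m x₀ x₁ β ρ α) (hx : x₀ < x₁)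
    (i : ℕ → Fin m) (n : ℕ) : seqPt S x₀ i n ∈ Set.Icc x₀ x₁ :=
  wordComp_mapsTo hS _ (Set.left_mem_Icc.mpr hx.le)

lemma seqPt_dist {S : Fin m → ℝ → ℝ} (hS : S ∈ ThetaSet m x₀ x₁ β ρ α) (hβ : 0 < β)
    (hβρ : β ≤ ρ) (hx : x₀ < x₁) (i : ℕ → Fin m) (n : ℕ) :
    dist (seqPt S x₀ i n) (seqPt S x₀ i (n + 1)) ≤ (x₁ - x₀) * ρ ^ n := by
  have hx0 : x₀ ∈ Set.Icc x₀ x₁ := Set.left_mem_Icc.mpr hx.le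
  have e1 : seqPt S x₀ i (n + 1) =
      wordComp S (List.ofFn fun k : Fin n => i k) (S (i n) x₀) := by
    unfold seqPt
    rw [List.ofFn_succ']
    simp only [List.concat_eq_append, wordComp_append']
    rfl
  have hmem : S (i n) x₀ ∈ Set.Icc x₀ x₁ := (hS (i n)).1 hx0
  rw [Real.dist_eq, e1]
  calc |wordComp S (List.ofFn fun k : Fin n => i k) x₀ -
        wordComp S (List.ofFn fun k : Fin n => i k) (S (i n) x₀)|
      ≤ ρ ^ (List.ofFn fun k : Fin n => i k).length * |x₀ - S (i n) x₀| :=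
        wordComp_lip hS hβ hβρ _ hx0 hmem
    _ ≤ ρ ^ n * (x₁ - x₀) := by
        rw [List.length_ofFn]
        exact mul_le_mul_of_nonneg_left (abs_sub_le_width hx0 hmem)
          (pow_nonneg (le_trans hβ.le hβρ) n)
    _ = (x₁ - x₀) * ρ ^ n := mul_comm _ _

lemma natProj_tendsto {S : Fin m → ℝ → ℝ} (hS : S ∈ ThetaSet m x₀ x₁ β ρ α) (hβ : 0 < β)
    (hβρ : β ≤ ρ) (hρ : ρ < 1) (hx : x₀ < x₁) (i : ℕ → Fin m) :
    Tendsto (seqPt S x₀ i) atTop (𝓝 (natProj S x₀ i)) ∧ natProj S x₀ i ∈ Set.Icc x₀ x₁ := by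
  have hc : CauchySeq (seqPt S x₀ i) :=
    cauchySeq_of_le_geometric ρ (x₁ - x₀) hρ (seqPt_dist hS hβ hβρ hx i)
  obtain ⟨L, hL⟩ := cauchySeq_tendsto_of_complete hc
  have hlim : natProj S x₀ i = L := by
    rw [natProj_eq_limUnder]; exact hL.limUnder_eq
  rw [hlim]
  exact ⟨hL, isClosed_Icc.mem_of_tendsto hL (Eventually.of_forall (seqPt_mem hS hx i))⟩

/-- concatenation of a word with an infinite code -/
def appendCode {m : ℕ} (u : List (Fin m)) (i : ℕ → Fin m) : ℕ → Fin m :=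
  fun n => if h : n < u.length then u.get ⟨n, h⟩ else i (n - u.length)

lemma ofFn_appendCode (u : List (Fin m)) (i : ℕ → Fin m) (n : ℕ) :
    (List.ofFn fun k : Fin (u.length + n) => appendCode u i k) =
      u ++ List.ofFn fun k : Fin n => i k := by
  apply List.ext_getElem
  · simp
  · intro j h1 h2
    simp only [List.getElem_ofFn]
    rcases lt_or_ge j u.length with hj | hj
    · rw [List.getElem_append_left hj]
      simp [appendCode, hj]
    · rw [List.getElem_append_right hj]
      simp only [appendCode, List.getElem_ofFn]
      rw [dif_neg (not_lt.mpr hj)]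

lemma natProj_append {S : Fin m → ℝ → ℝ} (hS : S ∈ ThetaSet m x₀ x₁ β ρ α) (hβ : 0 < β)
    (hβρ : β ≤ ρ) (hρ : ρ < 1) (hx : x₀ < x₁) (u : List (Fin m)) (i : ℕ → Fin m) :
    natProj S x₀ (appendCode u i) = wordComp S u (natProj S x₀ i) := by
  obtain ⟨hT, hmem⟩ := natProj_tendsto hS hβ hβρ hρ hx i
  obtain ⟨hT', _⟩ := natProj_tendsto hS hβ hβρ hρ hx (appendCode u i)
  have key : ∀ n, seqPt S x₀ (appendCode u i) (n + u.length) = wordComp S u (seqPt S x₀ i n) := by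
    intro n
    have hn : n + u.length = u.length + n := Nat.add_comm _ _
    rw [hn]
    unfold seqPt
    rw [ofFn_appendCode, wordComp_append']
  have h1 : Tendsto (fun n => seqPt S x₀ (appendCode u i) (n + u.length)) atTop
      (𝓝 (natProj S x₀ (appendCode u i))) := hT'.comp (tendsto_add_atTop_nat u.length)
  have h2 : Tendsto (fun n => wordComp S u (seqPt S x₀ i n)) atTop
      (𝓝 (wordComp S u (natProj S x₀ i))) := by
    rw [tendsto_iff_dist_tendsto_zero]
    have hb : ∀ n, dist (wordComp S u (seqPt S x₀ i n)) (wordComp S u (natProj S x₀ i))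
        ≤ dist (seqPt S x₀ i n) (natProj S x₀ i) := by
      intro n
      rw [Real.dist_eq, Real.dist_eq]
      exact wordComp_lip_one hS hβ hβρ hρ u (seqPt_mem hS hx i n) hmem
    exact squeeze_zero (fun n => dist_nonneg) hb (tendsto_iff_dist_tendsto_zero.mp hT)
  have h1' : Tendsto (fun n => wordComp S u (seqPt S x₀ i n)) atTop
      (𝓝 (natProj S x₀ (appendCode u i))) := by
    simpa only [key] using h1
  exact tendsto_nhds_unique h1' h2

end Aux2

section Aux3

open Filter Set Topology

variable {m : ℕ} {x₀ x₁ β ρ α : ℝ}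

lemma natProj_close {S T : Fin m → ℝ → ℝ} (hS : S ∈ ThetaSet m x₀ x₁ β ρ α)
    (hT : T ∈ ThetaSet m x₀ x₁ β ρ α) (hβ : 0 < β) (hβρ : β ≤ ρ) (hρ : ρ < 1) (hx : x₀ < x₁)
    {ε₀ : ℝ} (hε₀ : 0 ≤ ε₀) (hd : ∀ i : Fin m, ∀ x ∈ Set.Icc x₀ x₁, |S i x - T i x| ≤ ε₀)
    (i : ℕ → Fin m) : |natProj S x₀ i - natProj T x₀ i| ≤ ε₀ / (1 - ρ) := by
  have hρ0 : (0:ℝ) < ρ := lt_of_lt_of_le hβ hβρ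
  have h1ρ : (0:ℝ) < 1 - ρ := by linarith
  have key : ∀ n : ℕ, ∀ j : ℕ → Fin m,
      |seqPt S x₀ j n - seqPt T x₀ j n| ≤ ε₀ * ∑ k ∈ Finset.range n, ρ ^ k := by
    intro n
    induction n with
    | zero => intro j; simp [seqPt, wordComp]
    | succ n ih =>
      intro j
      have eS : seqPt S x₀ j (n + 1) = S (j 0) (seqPt S x₀ (fun k => j (k + 1)) n) := by
        unfold seqPt; rw [List.ofFn_succ]; rfl
      have eT : seqPt T x₀ j (n + 1) = T (j 0) (seqPt T x₀ (fun k => j (k + 1)) n) := by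
        unfold seqPt; rw [List.ofFn_succ]; rfl
      set a := seqPt S x₀ (fun k => j (k + 1)) n with ha
      set b := seqPt T x₀ (fun k => j (k + 1)) n with hb
      have hbm : b ∈ Set.Icc x₀ x₁ := seqPt_mem hT hx _ n
      have ham : a ∈ Set.Icc x₀ x₁ := seqPt_mem hS hx _ n
      rw [eS, eT]
      calc |S (j 0) a - T (j 0) b|
          ≤ |S (j 0) a - S (j 0) b| + |S (j 0) b - T (j 0) b| := by
            have := abs_sub_le (S (j 0) a) (S (j 0) b) (T (j 0) b); linarith
        _ ≤ ρ * |a - b| + ε₀ := by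
            have h1 := theta_lip hS hβ (j 0) ham hbm
            have h2 := hd (j 0) b hbm
            linarith
        _ ≤ ρ * (ε₀ * ∑ k ∈ Finset.range n, ρ ^ k) + ε₀ := by
            have := ih (fun k => j (k + 1))
            nlinarith [this, hρ0.le]
        _ = ε₀ * ∑ k ∈ Finset.range (n + 1), ρ ^ k := by
            rw [geom_sum_succ]; ring
  have hgs : ∀ n : ℕ, ε₀ * ∑ k ∈ Finset.range n, ρ ^ k ≤ ε₀ / (1 - ρ) := by
    intro n
    have hsum : ∑ k ∈ Finset.range n, ρ ^ k ≤ 1 / (1 - ρ) := by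
      have hgm := geom_sum_mul ρ n
      rw [le_div_iff₀ h1ρ]
      have hpn : (0:ℝ) ≤ ρ ^ n := pow_nonneg hρ0.le n
      nlinarith [hgm]
    calc ε₀ * ∑ k ∈ Finset.range n, ρ ^ k ≤ ε₀ * (1 / (1 - ρ)) :=
          mul_le_mul_of_nonneg_left hsum hε₀
      _ = ε₀ / (1 - ρ) := by ring
  obtain ⟨hTS, _⟩ := natProj_tendsto hS hβ hβρ hρ hx i
  obtain ⟨hTT, _⟩ := natProj_tendsto hT hβ hβρ hρ hx i
  have habs : Tendsto (fun n => |seqPt S x₀ i n - seqPt T x₀ i n|) atTop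
      (𝓝 |natProj S x₀ i - natProj T x₀ i|) := (hTS.sub hTT).abs
  exact le_of_tendsto habs (Eventually.of_forall fun n => le_trans (key n i) (hgs n))

lemma distTheta_ge {S T : Fin m → ℝ → ℝ} (hS : S ∈ ThetaSet m x₀ x₁ β ρ α)
    (hT : T ∈ ThetaSet m x₀ x₁ β ρ α) (hx : x₀ < x₁) (i : Fin m) {x : ℝ}
    (hxm : x ∈ Set.Icc x₀ x₁) : |S i x - T i x| ≤ distTheta x₀ x₁ α S T := by
  haveI : Nonempty ↥(Set.Icc x₀ x₁) := ⟨⟨x₀, Set.left_mem_Icc.mpr hx.le⟩⟩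
  have b1 : |S i x - T i x| ≤ ⨆ y : Set.Icc x₀ x₁, |S i y.1 - T i y.1| := by
    apply le_ciSup (f := fun y : Set.Icc x₀ x₁ => |S i y.1 - T i y.1|) ?_ ⟨x, hxm⟩
    refine ⟨x₁ - x₀, ?_⟩
    rintro _ ⟨y, rfl⟩
    exact abs_sub_le_width ((hS i).1 y.2) ((hT i).1 y.2)
  have b2 : (0:ℝ) ≤ ⨆ y : Set.Icc x₀ x₁, |deriv (S i) y.1 - deriv (T i) y.1| :=
    Real.iSup_nonneg fun _ => abs_nonneg _
  have b3 : (0:ℝ) ≤ ⨆ p : Set.Icc x₀ x₁ × Set.Icc x₀ x₁,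
      |(deriv (S i) p.1.1 - deriv (T i) p.1.1) - (deriv (S i) p.2.1 - deriv (T i) p.2.1)| /
        |p.1.1 - p.2.1| ^ α :=
    Real.iSup_nonneg fun p => div_nonneg (abs_nonneg _) (by positivity)
  have b4 : ((⨆ y : Set.Icc x₀ x₁, |S i y.1 - T i y.1|) +
      (⨆ y : Set.Icc x₀ x₁, |deriv (S i) y.1 - deriv (T i) y.1|) +
      ⨆ p : Set.Icc x₀ x₁ × Set.Icc x₀ x₁,
        |(deriv (S i) p.1.1 - deriv (T i) p.1.1) - (deriv (S i) p.2.1 - deriv (T i) p.2.1)| /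
          |p.1.1 - p.2.1| ^ α) ≤ distTheta x₀ x₁ α S T := by
    apply le_ciSup ?_ i
    exact (Set.finite_range _).bddAbove
  unfold distTheta at b4 ⊢
  linarith

lemma diam_transfer {A B : Set ℝ} {η : ℝ} (hη : 0 ≤ η) (hB : Bornology.IsBounded B)
    (h : ∀ a ∈ A, ∃ b ∈ B, |a - b| ≤ η) :
    Metric.diam A ≤ Metric.diam B + 2 * η := by
  apply Metric.diam_le_of_forall_dist_le (by positivity)
  intro a ha a' ha'
  obtain ⟨b, hb, h1⟩ := h a ha
  obtain ⟨b', hb', h2⟩ := h a' ha'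
  have h3 : dist b b' ≤ Metric.diam B := Metric.dist_le_diam_of_mem hB hb hb'
  rw [Real.dist_eq] at h3 ⊢
  have h4 : |a - a'| ≤ |a - b| + |b - b'| + |b' - a'| := by
    have t1 := abs_sub_le a b a'
    have t2 := abs_sub_le b b' a'
    linarith
  have h5 : |b' - a'| = |a' - b'| := abs_sub_comm _ _
  linarith

end Aux3

section Aux4

open Filter Set Topology

variable {m : ℕ} {x₀ x₁ β ρ α : ℝ}

lemma image_diam_close {S T : Fin m → ℝ → ℝ} (hS : S ∈ ThetaSet m x₀ x₁ β ρ α)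
    (hT : T ∈ ThetaSet m x₀ x₁ β ρ α) (hβ : 0 < β) (hβρ : β ≤ ρ) (hρ : ρ < 1) (hx : x₀ < x₁)
    {η : ℝ} (hη : 0 ≤ η)
    (hclose : ∀ i : ℕ → Fin m, |natProj T x₀ i - natProj S x₀ i| ≤ η) (u : List (Fin m)) :
    Metric.diam (wordComp T u '' attractor T x₀) ≤
      Metric.diam (wordComp S u '' attractor S x₀) + 2 * η := by
  apply diam_transfer hη
  · apply Bornology.IsBounded.subset (Metric.isBounded_Icc x₀ x₁)
    rintro _ ⟨_, ⟨j, rfl⟩, rfl⟩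
    exact wordComp_mapsTo hS u ((natProj_tendsto hS hβ hβρ hρ hx j).2)
  · rintro a ⟨_, ⟨j, rfl⟩, rfl⟩
    refine ⟨wordComp S u (natProj S x₀ j), ⟨natProj S x₀ j, Set.mem_range_self j, rfl⟩, ?_⟩
    rw [← natProj_append hT hβ hβρ hρ hx u j, ← natProj_append hS hβ hβρ hρ hx u j]
    exact hclose (appendCode u j)

end Aux4


/-- Lemma 4.2: in the metric space `Θ_{β,ρ}^m(X)` the set of IFSs
failing the Weak Separation Property is a `G_δ` set, i.e. it is a countable
intersection of sets that are open for the metric `distTheta`. -/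
theorem stmt12 (m : ℕ) (x₀ x₁ β ρ α : ℝ) (hx : x₀ < x₁)
    (hβ : 0 < β) (hρ : ρ < 1) (hβρ : β ≤ ρ) (hα : 0 < α) (hα1 : α ≤ 1) :
    ∃ V : ℕ → Set {S : Fin m → ℝ → ℝ // S ∈ ThetaSet m x₀ x₁ β ρ α},
      (∀ n : ℕ, ∀ S ∈ V n, ∃ ε > (0 : ℝ),
        ∀ T : {S : Fin m → ℝ → ℝ // S ∈ ThetaSet m x₀ x₁ β ρ α},
          distTheta x₀ x₁ α S.1 T.1 < ε → T ∈ V n) ∧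
      {S : {S : Fin m → ℝ → ℝ // S ∈ ThetaSet m x₀ x₁ β ρ α} | ¬ WSPholds S.1 x₀} =
        ⋂ n : ℕ, V n := by
  classical
  have hρ0 : (0:ℝ) < ρ := lt_of_lt_of_le hβ hβρ
  have h1ρ : (0:ℝ) < 1 - ρ := by linarith
  refine ⟨fun N => {S | ∃ x ∈ attractor S.1 x₀, ∃ r > (0:ℝ),
    ¬ ((PhiFam S.1 x₀ x r).Finite ∧ (PhiFam S.1 x₀ x r).ncard ≤ N)}, ?_, ?_⟩
  · rintro N ⟨S, hSΘ⟩ hmem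
    obtain ⟨x, hxΛ', r, hrpos, hbad'⟩ := hmem
    have hxΛ : x ∈ attractor S x₀ := hxΛ'
    have hbad : ¬ ((PhiFam S x₀ x r).Finite ∧ (PhiFam S x₀ x r).ncard ≤ N) := hbad'
    haveI : Nonempty ↥(attractor S x₀) := ⟨⟨x, hxΛ⟩⟩
    -- extract a subfamily of cardinality N+1
    have hext : ∃ t ⊆ PhiFam S x₀ x r, t.Finite ∧ t.ncard = N + 1 := by
      by_cases hfin : (PhiFam S x₀ x r).Finite
      · have hcard : N + 1 ≤ (PhiFam S x₀ x r).ncard := by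
          rcases not_and_or.mp hbad with h | h
          · exact absurd hfin h
          · omega
        obtain ⟨t, ht1, ht2⟩ := Set.exists_subset_card_eq hcard
        exact ⟨t, ht1, hfin.subset ht1, ht2⟩
      · obtain ⟨t, ht1, ht2, ht3⟩ := Set.Infinite.exists_subset_ncard_eq hfin (N+1)
        exact ⟨t, ht1, ht2, ht3⟩
    obtain ⟨t, htsub, htfin, htcard⟩ := hext
    have htne : t.Nonempty := by
      rw [Set.nonempty_iff_ne_empty]; intro h; rw [h] at htcard; simp at htcard
    -- choose words
    have hWex : ∀ g : ↥(attractor S x₀) → ℝ, g ∈ t →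
        ∃ u : List (Fin m),
          Metric.diam (wordComp S u '' attractor S x₀) ≤ r ∧
          r < Metric.diam (wordComp S u.dropLast '' attractor S x₀) ∧
          (wordComp S u '' attractor S x₀ ∩ Metric.closedBall x r).Nonempty ∧
          g = (attractor S x₀).restrict (wordComp S u) := fun g hg => htsub hg
    choose! W hW1 hW2 hW3 hW4 using hWex
    -- witnesses of distinctness
    have hPex : ∀ g g' : ↥(attractor S x₀) → ℝ, g ≠ g' → ∃ p, g p ≠ g' p :=
      fun g g' hne => Function.ne_iff.mp hne
    choose! P hP using hPex
    -- finite minima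
    set F := htfin.toFinset with hF
    have hFne : F.Nonempty := (Set.Finite.toFinset_nonempty htfin).mpr htne
    set δ₁ := F.inf' hFne
      (fun g => Metric.diam (wordComp S (W g).dropLast '' attractor S x₀) - r) with hδ₁def
    have hδ₁ : 0 < δ₁ := by
      rw [hδ₁def, Finset.lt_inf'_iff]
      intro g hg
      have := hW2 g (htfin.mem_toFinset.mp hg)
      simp only [sub_pos]
      linarith
    have hFF : (F ×ˢ F).Nonempty := hFne.product hFne
    set c : (↥(attractor S x₀) → ℝ) × (↥(attractor S x₀) → ℝ) → ℝ :=
      fun q => if q.1 = q.2 then 1 else |q.1 (P q.1 q.2) - q.2 (P q.1 q.2)| with hc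
    set δ₂ := (F ×ˢ F).inf' hFF c with hδ₂def
    have hδ₂ : 0 < δ₂ := by
      rw [hδ₂def, Finset.lt_inf'_iff]
      rintro ⟨g, g'⟩ hq
      by_cases h : g = g'
      · simp [hc, h]
      · simp only [hc, if_neg h]
        exact abs_pos.mpr (sub_ne_zero.mpr (hP g g' h))
    set η := min (δ₁ / 5) (δ₂ / 3) with hηdef
    have hη : 0 < η := lt_min (by linarith) (by linarith)
    have hη1 : η ≤ δ₁ / 5 := min_le_left _ _
    have hη2 : η ≤ δ₂ / 3 := min_le_right _ _
    refine ⟨(1 - ρ) * η, by positivity, ?_⟩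
    rintro ⟨T, hTΘ⟩ hdist
    have hd : ∀ i : Fin m, ∀ y ∈ Set.Icc x₀ x₁, |S i y - T i y| ≤ (1 - ρ) * η :=
      fun i y hy => le_of_lt (lt_of_le_of_lt (distTheta_ge hSΘ hTΘ hx i hy) hdist)
    have hcloseST : ∀ i : ℕ → Fin m, |natProj S x₀ i - natProj T x₀ i| ≤ η := by
      intro i
      have := natProj_close hSΘ hTΘ hβ hβρ hρ hx (by positivity) hd i
      rwa [mul_comm, mul_div_assoc, div_self (ne_of_gt h1ρ), mul_one] at this
    have hcloseTS : ∀ i : ℕ → Fin m, |natProj T x₀ i - natProj S x₀ i| ≤ η := by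
      intro i; rw [abs_sub_comm]; exact hcloseST i
    have hdiamTS : ∀ u : List (Fin m),
        Metric.diam (wordComp T u '' attractor T x₀) ≤
          Metric.diam (wordComp S u '' attractor S x₀) + 2 * η :=
      image_diam_close hSΘ hTΘ hβ hβρ hρ hx hη.le hcloseTS
    have hdiamST : ∀ u : List (Fin m),
        Metric.diam (wordComp S u '' attractor S x₀) ≤
          Metric.diam (wordComp T u '' attractor T x₀) + 2 * η :=
      image_diam_close hTΘ hSΘ hβ hβρ hρ hx hη.le hcloseST
    obtain ⟨j₀, hj₀⟩ := hxΛ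
    refine ⟨natProj T x₀ j₀, Set.mem_range_self j₀, r + 2*η, by linarith, ?_⟩
    set F' : (↥(attractor S x₀) → ℝ) → (↥(attractor T x₀) → ℝ) :=
      fun g => (attractor T x₀).restrict (wordComp T (W g)) with hF'
    have himg : F' '' t ⊆ PhiFam T x₀ (natProj T x₀ j₀) (r + 2*η) := by
      rintro _ ⟨g, hg, rfl⟩
      refine ⟨W g, ?_, ?_, ?_, rfl⟩
      · have h1 := hdiamTS (W g)
        have h2 := hW1 g hg
        linarith
      · have h1 : δ₁ ≤ Metric.diam (wordComp S (W g).dropLast '' attractor S x₀) - r :=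
          Finset.inf'_le _ (htfin.mem_toFinset.mpr hg)
        have h2 := hdiamST ((W g).dropLast)
        linarith
      · obtain ⟨q, ⟨p, hpΛ, hpq⟩, hqball⟩ := hW3 g hg
        obtain ⟨jp, hjp⟩ := hpΛ
        refine ⟨natProj T x₀ (appendCode (W g) jp),
          ⟨natProj T x₀ jp, Set.mem_range_self jp,
            (natProj_append hTΘ hβ hβρ hρ hx (W g) jp).symm⟩, ?_⟩
        rw [Metric.mem_closedBall, Real.dist_eq]
        have e1 : natProj S x₀ (appendCode (W g) jp) = q := by
          rw [natProj_append hSΘ hβ hβρ hρ hx (W g) jp, hjp]; exact hpq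
        have h3 : |natProj T x₀ (appendCode (W g) jp) - q| ≤ η := by
          rw [← e1]; exact hcloseTS _
        have h4 : |q - x| ≤ r := by
          rw [Metric.mem_closedBall, Real.dist_eq] at hqball; exact hqball
        have h5 : |x - natProj T x₀ j₀| ≤ η := by rw [← hj₀]; exact hcloseST j₀
        have tri : |natProj T x₀ (appendCode (W g) jp) - natProj T x₀ j₀| ≤
            |natProj T x₀ (appendCode (W g) jp) - q| + |q - x| + |x - natProj T x₀ j₀| := by
          have t1 := abs_sub_le (natProj T x₀ (appendCode (W g) jp)) q (natProj T x₀ j₀)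
          have t2 := abs_sub_le q x (natProj T x₀ j₀)
          linarith
        linarith
    have hinj : Set.InjOn F' t := by
      intro g hg g' hg' he
      by_contra hne
      have hδ2le : δ₂ ≤ |g (P g g') - g' (P g g')| := by
        have h0 : ((g, g') : (↥(attractor S x₀) → ℝ) × (↥(attractor S x₀) → ℝ)) ∈ F ×ˢ F :=
          Finset.mem_product.mpr ⟨htfin.mem_toFinset.mpr hg, htfin.mem_toFinset.mpr hg'⟩
        have := Finset.inf'_le c h0
        rw [hδ₂def]
        exact this.trans (le_of_eq (by simp [hc, if_neg hne]))
      set p := P g g' with hp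
      obtain ⟨jp, hjp⟩ := p.2
      have eg : g p = natProj S x₀ (appendCode (W g) jp) := by
        conv_lhs => rw [hW4 g hg]
        show wordComp S (W g) p.1 = _
        rw [natProj_append hSΘ hβ hβρ hρ hx (W g) jp, hjp]
      have eg' : g' p = natProj S x₀ (appendCode (W g') jp) := by
        conv_lhs => rw [hW4 g' hg']
        show wordComp S (W g') p.1 = _
        rw [natProj_append hSΘ hβ hβρ hρ hx (W g') jp, hjp]
      set pt : ↥(attractor T x₀) := ⟨natProj T x₀ jp, Set.mem_range_self jp⟩ with hpt
      have vg : F' g pt = natProj T x₀ (appendCode (W g) jp) := by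
        show wordComp T (W g) (natProj T x₀ jp) = _
        rw [natProj_append hTΘ hβ hβρ hρ hx (W g) jp]
      have vg' : F' g' pt = natProj T x₀ (appendCode (W g') jp) := by
        show wordComp T (W g') (natProj T x₀ jp) = _
        rw [natProj_append hTΘ hβ hβρ hρ hx (W g') jp]
      have hz : F' g pt = F' g' pt := by rw [he]
      have h6 : |g p - g' p| ≤ 2 * η := by
        rw [eg, eg']
        have t1 := hcloseST (appendCode (W g) jp)
        have t2 := hcloseTS (appendCode (W g') jp)
        have t3 : natProj T x₀ (appendCode (W g) jp) = natProj T x₀ (appendCode (W g') jp) := by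
          rw [← vg, ← vg', hz]
        have tri := abs_sub_le (natProj S x₀ (appendCode (W g) jp))
          (natProj T x₀ (appendCode (W g) jp)) (natProj S x₀ (appendCode (W g') jp))
        rw [t3] at tri t1
        linarith
      linarith
    intro hcon
    obtain ⟨hfinT, hcardT⟩ : (PhiFam T x₀ (natProj T x₀ j₀) (r + 2*η)).Finite ∧
      (PhiFam T x₀ (natProj T x₀ j₀) (r + 2*η)).ncard ≤ N := hcon
    have h1 : (F' '' t).ncard = N + 1 := by rw [Set.ncard_image_of_injOn hinj, htcard]
    have h2 : (F' '' t).ncard ≤ (PhiFam T x₀ (natProj T x₀ j₀) (r + 2*η)).ncard :=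
      Set.ncard_le_ncard himg hfinT
    omega
  · ext S
    simp only [Set.mem_setOf_eq, Set.mem_iInter, WSPholds]
    push_neg
    rfl
end
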